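/- arXiv:1104.4861 — 2 statements merged into one kernel-verified Lean document; each statement's English description precedes it below -/
import Mathlib

section
/- Let v, ε, η, δt, δx > 0 and let the amplification factor be g₁(θ) = 1 - (v·δt/δx) - 4·(ε·δt/δx²)·sin²(θ/2) - (η·δt/δx^{4/3}) + [(v·δt/δx) + (2 - 2^{-1/3})·(η·δt/δx^{4/3})]·e^{-iθ} - (η·δt/δx^{4/3})·∑_{l=2}^{∞}[(l+1)^{-1/3} - 2l^{-1/3} + (l-1)^{-1/3}]·e^{-ilθ}. If for a given θ ∈ (0, π] the conditions (1 - 2^{-1/3})·(η·δt/δx^{4/3}) ≤ 2·(ε·δt/δx²)·sin²(θ/2) and (v·δt/δx) + 2·(ε·δt/δx²) + (2 - 2^{-1/3})·(η·δt/δx^{4/3}) ≤ 1 hold, then |g₁(θ)| ≤ 1. -/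
open Real Complex Filter

lemma fcoef_nonneg (n : ℕ) : 0 ≤ ((n:ℝ)+3) ^ (-(1/3) : ℝ) - 2 * ((n:ℝ)+2) ^ (-(1/3) : ℝ)
    + ((n:ℝ)+1) ^ (-(1/3) : ℝ) := by
  have hx : (0:ℝ) < (n:ℝ)+1 := by positivity
  have hy : (0:ℝ) < (n:ℝ)+2 := by positivity
  have hz : (0:ℝ) < (n:ℝ)+3 := by positivity
  set e : ℝ := -(1/3) with he
  have hu : 0 < ((n:ℝ)+1) ^ e := Real.rpow_pos_of_pos hx e
  have hw : 0 < ((n:ℝ)+3) ^ e := Real.rpow_pos_of_pos hz e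
  have ht : 0 < ((n:ℝ)+2) ^ e := Real.rpow_pos_of_pos hy e
  have hkey : (((n:ℝ)+2) ^ e) ^ 2 ≤ ((n:ℝ)+1) ^ e * ((n:ℝ)+3) ^ e := by
    have h1 : (((n:ℝ)+2) ^ e) ^ 2 = (((n:ℝ)+2) ^ (2:ℕ)) ^ e := by
      rw [← Real.rpow_natCast (((n:ℝ)+2) ^ e) 2, ← Real.rpow_natCast ((n:ℝ)+2) 2,
        ← Real.rpow_mul hy.le, ← Real.rpow_mul hy.le]
      ring_nf
    have h2 : (((n:ℝ)+1) * ((n:ℝ)+3)) ^ e = ((n:ℝ)+1) ^ e * ((n:ℝ)+3) ^ e :=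
      Real.mul_rpow hx.le hz.le
    have h3 : (((n:ℝ)+2) ^ (2:ℕ)) ^ e ≤ (((n:ℝ)+1) * ((n:ℝ)+3)) ^ e := by
      apply Real.rpow_le_rpow_of_nonpos (by positivity) (by ring_nf; nlinarith) (by norm_num [he])
    calc (((n:ℝ)+2) ^ e) ^ 2 = (((n:ℝ)+2) ^ (2:ℕ)) ^ e := h1
      _ ≤ (((n:ℝ)+1) * ((n:ℝ)+3)) ^ e := h3
      _ = _ := h2
  nlinarith [sq_nonneg (((n:ℝ)+1) ^ e - ((n:ℝ)+3) ^ e), hu, hw, ht, hkey]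

lemma fcoef_hasSum : HasSum (fun n : ℕ => ((n:ℝ)+3) ^ (-(1/3) : ℝ) - 2 * ((n:ℝ)+2) ^ (-(1/3) : ℝ)
    + ((n:ℝ)+1) ^ (-(1/3) : ℝ)) (1 - (2:ℝ) ^ (-(1/3) : ℝ)) := by
  set e : ℝ := -(1/3) with he
  set g : ℕ → ℝ := fun n => ((n:ℝ)+2) ^ e - ((n:ℝ)+1) ^ e with hg
  have hsum : ∀ N : ℕ, ∑ i ∈ Finset.range N,
      (((i:ℝ)+3) ^ e - 2 * ((i:ℝ)+2) ^ e + ((i:ℝ)+1) ^ e) = g N - g 0 := by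
    intro N
    rw [← Finset.sum_range_sub g]
    apply Finset.sum_congr rfl
    intro i _
    simp only [hg]
    push_cast
    ring_nf
  rw [hasSum_iff_tendsto_nat_of_nonneg fcoef_nonneg]
  have ht2 : Tendsto (fun N : ℕ => ((N:ℝ)+2) ^ e) atTop (nhds 0) := by
    have := (tendsto_rpow_neg_atTop (by norm_num : (0:ℝ) < 1/3)).comp
      (tendsto_atTop_add_const_right atTop (2:ℝ) tendsto_natCast_atTop_atTop)
    simpa [Function.comp_def, he] using this
  have ht1 : Tendsto (fun N : ℕ => ((N:ℝ)+1) ^ e) atTop (nhds 0) := by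
    have := (tendsto_rpow_neg_atTop (by norm_num : (0:ℝ) < 1/3)).comp
      (tendsto_atTop_add_const_right atTop (1:ℝ) tendsto_natCast_atTop_atTop)
    simpa [Function.comp_def, he] using this
  have h0 : g 0 = (2:ℝ) ^ e - 1 := by
    simp only [hg]
    norm_num [Real.one_rpow]
  have hmain : Tendsto (fun N : ℕ => (((N:ℝ)+2) ^ e - ((N:ℝ)+1) ^ e) - ((2:ℝ) ^ e - 1))
      atTop (nhds (0 - 0 - ((2:ℝ) ^ e - 1))) := (ht2.sub ht1).sub tendsto_const_nhds
  rw [show (0:ℝ) - 0 - ((2:ℝ) ^ e - 1) = 1 - (2:ℝ) ^ e by ring] at hmain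
  exact hmain.congr fun N => by rw [hsum N, h0]

lemma real_ineq (a b c s m w : ℝ) (ha : 0 < a) (hb : 0 < b) (hc : 0 < c)
    (hs1 : s ^ 2 ≤ 1) (hm0 : 0 < m) (hm1 : m < 1)
    (h1 : (1 - m) * c ≤ 2 * b * s ^ 2) (h2 : a + 2 * b + (2 - m) * c ≤ 1)
    (hw : w ^ 2 = 4 * s ^ 2 - 4 * s ^ 4) :
    (1 - a - 4 * b * s ^ 2 - c + (a + (2 - m) * c) * (1 - 2 * s ^ 2)) ^ 2
      + (-((a + (2 - m) * c) * w)) ^ 2 ≤ (1 - (1 - m) * c) ^ 2 := by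
  have hBpos : (0:ℝ) ≤ a + (2 - m) * c := by
    have h2m : (0:ℝ) < 2 - m := by linarith
    exact (add_pos ha (mul_pos h2m hc)).le
  have h2' : (0:ℝ) ≤ 1 - a - 2 * b - (2 - m) * c := by linarith
  have h1' : (0:ℝ) ≤ 2 * b * s ^ 2 - (1 - m) * c := by linarith
  have hq : (0:ℝ) ≤ 1 - s ^ 2 * (2 * b + (a + (2 - m) * c)) := by
    nlinarith [mul_nonneg (by linarith : (0:ℝ) ≤ 1 - s ^ 2)
      (by linarith : (0:ℝ) ≤ 2 * b + (a + (2 - m) * c))]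
  have hww : (-((a + (2 - m) * c) * w)) ^ 2 = (a + (2 - m) * c) ^ 2 * (4 * s ^ 2 - 4 * s ^ 4) := by
    rw [show (-((a + (2 - m) * c) * w)) ^ 2 = (a + (2 - m) * c) ^ 2 * w ^ 2 by ring, hw]
  rw [hww]
  nlinarith [mul_nonneg h1' hq,
    mul_nonneg (mul_nonneg (sq_nonneg s) hBpos) h2',
    mul_nonneg (mul_nonneg (mul_nonneg (sq_nonneg s) hb.le) hBpos)
      (by linarith : (0:ℝ) ≤ 1 - s ^ 2)]

set_option maxHeartbeats 1000000 in
theorem stability_g1 (v ε η δt δx : ℝ) (hv : 0 < v) (hε : 0 < ε) (hη : 0 < η)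
    (hδt : 0 < δt) (hδx : 0 < δx) (θ : ℝ) (hθ : θ ∈ Set.Ioc 0 Real.pi)
    (hcond1 : (1 - (2 : ℝ) ^ (-(1 / 3) : ℝ)) * (η * δt / δx ^ ((4 : ℝ) / 3)) ≤
        2 * (ε * δt / δx ^ 2) * Real.sin (θ / 2) ^ 2)
    (hcond2 : v * δt / δx + 2 * (ε * δt / δx ^ 2) +
        (2 - (2 : ℝ) ^ (-(1 / 3) : ℝ)) * (η * δt / δx ^ ((4 : ℝ) / 3)) ≤ 1) :
    ‖((1 : ℂ) - (v * δt / δx : ℝ) - 4 * ((ε * δt / δx ^ 2 : ℝ) : ℂ) * (Real.sin (θ / 2) : ℂ) ^ 2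
        - ((η * δt / δx ^ ((4 : ℝ) / 3) : ℝ) : ℂ)
        + (((v * δt / δx : ℝ) : ℂ) +
            ((2 - (2 : ℝ) ^ (-(1 / 3) : ℝ) : ℝ) : ℂ) * ((η * δt / δx ^ ((4 : ℝ) / 3) : ℝ) : ℂ)) *
          Complex.exp (-(θ : ℂ) * Complex.I)
        - ((η * δt / δx ^ ((4 : ℝ) / 3) : ℝ) : ℂ) *
          ∑' n : ℕ,
            ((((n : ℝ) + 3) ^ (-(1 / 3) : ℝ) - 2 * ((n : ℝ) + 2) ^ (-(1 / 3) : ℝ)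
                + ((n : ℝ) + 1) ^ (-(1 / 3) : ℝ) : ℝ) : ℂ) *
              Complex.exp (-((n : ℂ) + 2) * (θ : ℂ) * Complex.I))‖ ≤ 1 := by
  obtain ⟨hθ0, hθπ⟩ := hθ
  set m : ℝ := (2 : ℝ) ^ (-(1/3) : ℝ) with hm
  set a : ℝ := v * δt / δx with ha_def
  set b : ℝ := ε * δt / δx ^ 2 with hb_def
  set c : ℝ := η * δt / δx ^ ((4:ℝ)/3) with hc_def
  set s : ℝ := Real.sin (θ / 2) with hs_def
  have ha : 0 < a := by positivity
  have hb : 0 < b := by positivity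
  have hc : 0 < c := by positivity
  have hm0 : 0 < m := Real.rpow_pos_of_pos (by norm_num) _
  have hm1 : m < 1 := Real.rpow_lt_one_of_one_lt_of_neg (by norm_num) (by norm_num)
  have hs0 : 0 < s := by
    apply Real.sin_pos_of_pos_of_lt_pi (by linarith)
    nlinarith [Real.pi_pos]
  have hs1 : s ^ 2 ≤ 1 := by
    rw [hs_def]
    exact Real.sin_sq_le_one _
  have hcos : Real.cos θ = 1 - 2 * s ^ 2 := by
    have h := Real.sin_sq_eq_half_sub (θ / 2)
    rw [show 2 * (θ / 2) = θ by ring] at h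
    rw [hs_def]
    linarith
  have hsinθ : Real.sin θ ^ 2 = 4 * s ^ 2 - 4 * s ^ 4 := by
    rw [Real.sin_sq, hcos]; ring
  -- the tail series
  set T : ℂ := ∑' n : ℕ,
      ((((n : ℝ) + 3) ^ (-(1/3) : ℝ) - 2 * ((n : ℝ) + 2) ^ (-(1/3) : ℝ)
          + ((n : ℝ) + 1) ^ (-(1/3) : ℝ) : ℝ) : ℂ) *
        Complex.exp (-((n : ℂ) + 2) * (θ : ℂ) * Complex.I) with hT_def
  have hnorm_eq : ∀ n : ℕ,
      ‖((((n : ℝ) + 3) ^ (-(1/3) : ℝ) - 2 * ((n : ℝ) + 2) ^ (-(1/3) : ℝ)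
          + ((n : ℝ) + 1) ^ (-(1/3) : ℝ) : ℝ) : ℂ) *
        Complex.exp (-((n : ℂ) + 2) * (θ : ℂ) * Complex.I)‖
      = ((n:ℝ)+3) ^ (-(1/3) : ℝ) - 2 * ((n:ℝ)+2) ^ (-(1/3) : ℝ) + ((n:ℝ)+1) ^ (-(1/3) : ℝ) := by
    intro n
    rw [norm_mul, Complex.norm_real, Real.norm_of_nonneg (fcoef_nonneg n)]
    have harg : -((n : ℂ) + 2) * (θ : ℂ) * Complex.I = ((-(((n:ℝ)+2) * θ) : ℝ) : ℂ) * Complex.I := by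
      push_cast; ring
    rw [harg, Complex.norm_exp_ofReal_mul_I, mul_one]
  have hsummable_norm : Summable (fun n : ℕ =>
      ‖((((n : ℝ) + 3) ^ (-(1/3) : ℝ) - 2 * ((n : ℝ) + 2) ^ (-(1/3) : ℝ)
          + ((n : ℝ) + 1) ^ (-(1/3) : ℝ) : ℝ) : ℂ) *
        Complex.exp (-((n : ℂ) + 2) * (θ : ℂ) * Complex.I)‖) := by
    apply Summable.congr fcoef_hasSum.summable
    intro n
    exact (hnorm_eq n).symm
  have hT : ‖T‖ ≤ 1 - m := by
    rw [hT_def]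
    calc ‖_‖ ≤ _ := norm_tsum_le_tsum_norm hsummable_norm
      _ = 1 - m := by
        rw [tsum_congr hnorm_eq, fcoef_hasSum.tsum_eq]
  -- the head
  have hexp : Complex.exp (-(θ : ℂ) * Complex.I)
      = ((Real.cos θ : ℝ) : ℂ) - ((Real.sin θ : ℝ) : ℂ) * Complex.I := by
    rw [Complex.exp_mul_I]
    rw [show -(θ:ℂ) = ((-θ : ℝ) : ℂ) by push_cast; ring]
    rw [← Complex.ofReal_cos, ← Complex.ofReal_sin, Real.cos_neg, Real.sin_neg]
    push_cast; ring
  set x : ℝ := 1 - a - 4 * b * s ^ 2 - c + (a + (2 - m) * c) * Real.cos θ with hx_def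
  set y : ℝ := -((a + (2 - m) * c) * Real.sin θ) with hy_def
  have hsplit : (1 : ℂ) - (a : ℝ) - 4 * ((b : ℝ) : ℂ) * ((s : ℝ) : ℂ) ^ 2
      - ((c : ℝ) : ℂ)
      + (((a : ℝ) : ℂ) + ((2 - m : ℝ) : ℂ) * ((c : ℝ) : ℂ)) * Complex.exp (-(θ : ℂ) * Complex.I)
      - ((c : ℝ) : ℂ) * T
      = (((x : ℝ) : ℂ) + ((y : ℝ) : ℂ) * Complex.I) - ((c : ℝ) : ℂ) * T := by
    rw [hexp, hx_def, hy_def]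
    push_cast
    ring
  rw [hsplit]
  have hW : ‖((x : ℝ) : ℂ) + ((y : ℝ) : ℂ) * Complex.I‖ ≤ 1 - (1 - m) * c := by
    rw [Complex.norm_add_mul_I]
    have hnn : 0 ≤ 1 - (1 - m) * c := by
      have h1 : (1 - m) * c ≤ (2 - m) * c := by nlinarith [hc]
      nlinarith [hcond2, ha, hb]
    rw [show (1 : ℝ) - (1 - m) * c = Real.sqrt ((1 - (1 - m) * c) ^ 2) by
      rw [Real.sqrt_sq hnn]]
    apply Real.sqrt_le_sqrt
    rw [hx_def, hy_def, hcos]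
    exact real_ineq a b c s m (Real.sin θ) ha hb hc hs1 hm0 hm1 hcond1 hcond2 hsinθ
  calc ‖(((x : ℝ) : ℂ) + ((y : ℝ) : ℂ) * Complex.I) - ((c : ℝ) : ℂ) * T‖
      ≤ ‖((x : ℝ) : ℂ) + ((y : ℝ) : ℂ) * Complex.I‖
        + ‖((c : ℝ) : ℂ) * T‖ := by
        exact norm_sub_le _ _
    _ ≤ (1 - (1 - m) * c) + c * (1 - m) := by
        apply add_le_add hW
        rw [norm_mul, Complex.norm_real, Real.norm_of_nonneg hc.le]
        exact mul_le_mul_of_nonneg_left hT hc.le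
    _ ≤ 1 := by ring_nf; linarith
end

section
/- Let v, ε, η, δt, δx > 0 and let g₂(θ) = 1 - (v·δt/δx) - 4·(ε·δt/δx²)·sin²(θ/2) + (4/9)·(η·δt/δx^{4/3})·(ζ(7/3) - ζ(4/3)·cos θ) + [(v·δt/δx) + (4/9)·(ζ(4/3) - 1)·(η·δt/δx^{4/3})]·e^{-iθ} - (4/9)·(η·δt/δx^{4/3})·∑_{l=2}^{∞} l^{-7/3}·e^{-ilθ}. If for a given θ ∈ (0, π] the conditions (4/9)·(ζ(7/3) - 1 + ζ(4/3))·(η·δt/δx^{4/3}) ≤ 2·(ε·δt/δx²)·sin²(θ/2) and (v·δt/δx) + 2·(ε·δt/δx²) + (4/9)·(ζ(4/3) - 1)·(η·δt/δx^{4/3}) ≤ 1 hold, then |g₂(θ)| ≤ 1. -/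
open Real Complex

lemma summable_aux (p : ℝ) (hp : 1 < p) : Summable (fun n : ℕ => ((n : ℝ) + 1) ^ (-p)) := by
  have h := (Real.summable_nat_rpow (p := -p)).mpr (by linarith)
  have := (summable_nat_add_iff 1).mpr h
  refine this.congr fun n => ?_
  push_cast
  ring_nf

lemma summable_aux2 (p : ℝ) (hp : 1 < p) : Summable (fun n : ℕ => ((n : ℝ) + 2) ^ (-p)) := by
  have := (summable_nat_add_iff 1).mpr (summable_aux p hp)
  refine this.congr fun n => ?_
  push_cast
  ring_nf

lemma zeta_real_eq (p : ℝ) (hp : 1 < p) :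
    riemannZeta (p : ℂ) = ((∑' n : ℕ, ((n : ℝ) + 1) ^ (-p) : ℝ) : ℂ) := by
  rw [zeta_eq_tsum_one_div_nat_add_one_cpow (by simpa using hp), Complex.ofReal_tsum]
  refine tsum_congr fun n => ?_
  rw [Real.rpow_neg (by positivity), Complex.ofReal_inv,
    Complex.ofReal_cpow (by positivity), one_div]
  push_cast
  ring_nf

lemma zeta_re_eq (p : ℝ) (hp : 1 < p) :
    (riemannZeta (p : ℂ)).re = ∑' n : ℕ, ((n : ℝ) + 1) ^ (-p) := by
  rw [zeta_real_eq p hp, Complex.ofReal_re]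

lemma tsum_shift (p : ℝ) (hp : 1 < p) :
    (∑' n : ℕ, ((n : ℝ) + 1) ^ (-p)) = 1 + ∑' n : ℕ, ((n : ℝ) + 2) ^ (-p) := by
  rw [Summable.tsum_eq_zero_add (summable_aux p hp)]
  have h1 : (((0:ℕ):ℝ) + 1) ^ (-p) = 1 := by norm_num
  rw [h1]
  congr 1
  refine tsum_congr fun n => ?_
  push_cast
  ring_nf

lemma one_le_zeta_re (p : ℝ) (hp : 1 < p) : 1 ≤ (riemannZeta (p : ℂ)).re := by
  rw [zeta_re_eq p hp]
  calc (1 : ℝ) = ((0 : ℕ) + 1 : ℝ) ^ (-p) := by norm_num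
    _ ≤ _ := Summable.le_tsum (summable_aux p hp) 0 fun i _ => by positivity

lemma term_abs (θ : ℝ) (n : ℕ) :
    ‖(((((n : ℝ) + 2) ^ (-(7 / 3) : ℝ) : ℝ) : ℂ) *
      Complex.exp (-((n : ℂ) + 2) * (θ : ℂ) * Complex.I))‖ = ((n : ℝ) + 2) ^ (-(7/3) : ℝ) := by
  rw [norm_mul]
  have : -((n : ℂ) + 2) * (θ : ℂ) * Complex.I = ((-(((n:ℝ)+2) * θ) : ℝ) : ℂ) * Complex.I := by
    push_cast; ring
  rw [this, Complex.norm_exp_ofReal_mul_I, mul_one, Complex.norm_real, Real.norm_eq_abs,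
    _root_.abs_of_nonneg (by positivity)]

set_option maxHeartbeats 1000000 in
theorem stability_g2 (v ε η δt δx : ℝ) (hv : 0 < v) (hε : 0 < ε) (hη : 0 < η)
    (hδt : 0 < δt) (hδx : 0 < δx) (θ : ℝ) (hθ : θ ∈ Set.Ioc 0 Real.pi)
    (hcond1 : (4 / 9) * ((riemannZeta ((7 : ℂ) / 3)).re - 1 + (riemannZeta ((4 : ℂ) / 3)).re) *
        (η * δt / δx ^ ((4 : ℝ) / 3)) ≤ 2 * (ε * δt / δx ^ 2) * Real.sin (θ / 2) ^ 2)
    (hcond2 : v * δt / δx + 2 * (ε * δt / δx ^ 2) +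
        (4 / 9) * ((riemannZeta ((4 : ℂ) / 3)).re - 1) * (η * δt / δx ^ ((4 : ℝ) / 3)) ≤ 1) :
    ‖
      ((1 : ℂ) - (v * δt / δx : ℝ) - 4 * ((ε * δt / δx ^ 2 : ℝ) : ℂ) * (Real.sin (θ / 2) : ℂ) ^ 2
        + (4 / 9) * ((η * δt / δx ^ ((4 : ℝ) / 3) : ℝ) : ℂ) *
            (((riemannZeta ((7 : ℂ) / 3)).re : ℂ) -
              ((riemannZeta ((4 : ℂ) / 3)).re : ℂ) * (Real.cos θ : ℂ))
        + (((v * δt / δx : ℝ) : ℂ) +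
            (4 / 9) * (((riemannZeta ((4 : ℂ) / 3)).re : ℂ) - 1) *
              ((η * δt / δx ^ ((4 : ℝ) / 3) : ℝ) : ℂ)) * Complex.exp (-(θ : ℂ) * Complex.I)
        - (4 / 9) * ((η * δt / δx ^ ((4 : ℝ) / 3) : ℝ) : ℂ) *
          ∑' n : ℕ,
            ((((n : ℝ) + 2) ^ (-(7 / 3) : ℝ) : ℝ) : ℂ) *
              Complex.exp (-((n : ℂ) + 2) * (θ : ℂ) * Complex.I))‖ ≤ 1 := by
  have hp7 : (1:ℝ) < 7/3 := by norm_num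
  have hp4 : (1:ℝ) < 4/3 := by norm_num
  have h7c : ((7:ℂ)/3) = ((7/3 : ℝ) : ℂ) := by norm_num
  have h4c : ((4:ℂ)/3) = ((4/3 : ℝ) : ℂ) := by norm_num
  set ζ7 := (riemannZeta ((7:ℂ)/3)).re with hζ7
  set ζ4 := (riemannZeta ((4:ℂ)/3)).re with hζ4
  have hz7ge : 1 ≤ ζ7 := by rw [hζ7, h7c]; exact one_le_zeta_re _ hp7
  have hz4ge : 1 ≤ ζ4 := by rw [hζ4, h4c]; exact one_le_zeta_re _ hp4
  have hsum2 : Summable (fun n : ℕ => ((n:ℝ)+2)^(-(7/3):ℝ)) := summable_aux2 _ hp7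
  have htail : (∑' n : ℕ, ((n:ℝ)+2)^(-(7/3):ℝ)) = ζ7 - 1 := by
    rw [hζ7, h7c, zeta_re_eq _ hp7, tsum_shift _ hp7]; ring
  set a := v * δt / δx with ha_def
  set b := ε * δt / δx ^ 2 with hb_def
  set c := η * δt / δx ^ ((4:ℝ)/3) with hc_def
  have ha : 0 < a := by rw [ha_def]; positivity
  have hb : 0 < b := by rw [hb_def]; positivity
  have hc : 0 < c := by rw [hc_def]; positivity
  set s := Real.sin (θ/2) with hs_def
  have hs1 : s^2 ≤ 1 := Real.sin_sq_le_one _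
  have hs0 : 0 ≤ s^2 := sq_nonneg _
  have hcos : Real.cos θ = 1 - 2 * s^2 := by
    have h := Real.cos_two_mul (θ/2)
    have h2 : 2 * (θ/2) = θ := by ring
    rw [h2] at h
    have h3 := Real.sin_sq_add_cos_sq (θ/2)
    rw [hs_def]
    nlinarith [h, h3]
  set K : ℝ := 1 - a - 4*b*s^2 + (4/9)*c*(ζ7 - ζ4*Real.cos θ) with hK_def
  set B : ℝ := a + (4/9)*(ζ4-1)*c with hB_def
  have hB : 0 ≤ B := by rw [hB_def]; nlinarith
  set T : ℂ := ∑' n : ℕ, ((((n : ℝ) + 2) ^ (-(7 / 3) : ℝ) : ℝ) : ℂ) *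
      Complex.exp (-((n : ℂ) + 2) * (θ : ℂ) * Complex.I) with hT_def
  have hsumnorm : Summable (fun n : ℕ => ‖((((n : ℝ) + 2) ^ (-(7 / 3) : ℝ) : ℝ) : ℂ) *
      Complex.exp (-((n : ℂ) + 2) * (θ : ℂ) * Complex.I)‖) := by
    refine hsum2.congr fun n => ?_
    exact (term_abs θ n).symm
  have hTb : ‖T‖ ≤ ζ7 - 1 := by
    rw [← htail, hT_def]
    refine (norm_tsum_le_tsum_norm hsumnorm).trans_eq ?_
    refine tsum_congr fun n => ?_
    exact term_abs θ n
  have hexp : ‖Complex.exp (-(θ:ℂ)*Complex.I)‖ = 1 := by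
    have h : -(θ:ℂ)*Complex.I = ((-θ : ℝ):ℂ) * Complex.I := by push_cast; ring
    rw [h, Complex.norm_exp_ofReal_mul_I]
  have hKey : ((1 : ℂ) - (a : ℝ) - 4 * ((b : ℝ) : ℂ) * ((s : ℝ) : ℂ) ^ 2
        + (4 / 9) * ((c : ℝ) : ℂ) * (((ζ7 : ℝ) : ℂ) - ((ζ4 : ℝ) : ℂ) * (Real.cos θ : ℂ))
        + (((a : ℝ) : ℂ) + (4 / 9) * (((ζ4 : ℝ) : ℂ) - 1) * ((c : ℝ) : ℂ)) *
            Complex.exp (-(θ : ℂ) * Complex.I)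
        - (4 / 9) * ((c : ℝ) : ℂ) * T)
      = ((K : ℝ) : ℂ) + ((B : ℝ) : ℂ) * Complex.exp (-(θ : ℂ) * Complex.I)
        - (((4/9*c : ℝ)) : ℂ) * T := by
    rw [hK_def, hB_def]
    push_cast
    ring
  rw [hKey]
  have step1 : ‖((K : ℝ) : ℂ) + ((B : ℝ) : ℂ) * Complex.exp (-(θ : ℂ) * Complex.I)
        - (((4/9*c : ℝ)) : ℂ) * T‖
      ≤ |K| + B + (4/9*c) * ‖T‖ := by
    calc ‖_‖ ≤ ‖((K : ℝ) : ℂ) + ((B : ℝ) : ℂ) *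
            Complex.exp (-(θ : ℂ) * Complex.I)‖ + ‖(((4/9*c : ℝ)) : ℂ) * T‖ :=
          norm_sub_le _ _
      _ ≤ (‖((K : ℝ) : ℂ)‖ + ‖((B : ℝ) : ℂ) *
            Complex.exp (-(θ : ℂ) * Complex.I)‖) + ‖(((4/9*c : ℝ)) : ℂ) * T‖ :=
          add_le_add_left (norm_add_le _ _) _
      _ = |K| + B + (4/9*c) * ‖T‖ := by
          rw [norm_mul, norm_mul, hexp, Complex.norm_real, Complex.norm_real,
            Complex.norm_real, Real.norm_eq_abs, Real.norm_eq_abs, Real.norm_eq_abs,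
            _root_.abs_of_nonneg hB,
            _root_.abs_of_nonneg (by positivity : (0:ℝ) ≤ 4/9*c)]
          ring
  refine step1.trans ?_
  have hfinal : |K| + B + (4/9*c) * ‖T‖ ≤ |K| + B + (4/9*c) * (ζ7 - 1) := by
    gcongr
  refine hfinal.trans ?_
  rcases le_or_gt 0 K with hK | hK
  · rw [_root_.abs_of_nonneg hK]
    rw [hK_def, hB_def]
    nlinarith [mul_nonneg (mul_nonneg hc.le (by linarith : (0:ℝ) ≤ ζ4)) (by linarith : (0:ℝ) ≤ 1 - s^2)]
  · rw [abs_of_neg hK]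
    rw [hK_def, hB_def]
    nlinarith [mul_nonneg hb.le (by linarith : (0:ℝ) ≤ 1 - s^2),
      mul_nonneg (mul_nonneg hc.le (by linarith : (0:ℝ) ≤ ζ4)) hs0]
end
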